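/- arXiv:2301.08124 — 7 statements merged into one kernel-verified Lean document; each statement's English description precedes it below -/
import Mathlib

section
/- Let (x_n) be a nondecreasing sequence of real numbers, and let s: ℕ → ℕ be a computable function tending to infinity. If the sequence (x_{s(n+1)} − x_{s(n)})_n converges computably to 0, then the sequence (x_{n+1} − x_n)_n also converges computably to 0. -/
open Filter Topology

/-- `g` is a modulus of convergence of `x` to `y`. -/
def ConvModulus {X : Type*} [MetricSpace X] (x : ℕ → X) (y : X) (g : ℕ → ℕ) : Prop :=
  ∀ n m : ℕ, g n ≤ m → dist (x m) y ≤ (2 : ℝ)⁻¹ ^ n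

/-- `g` is a Cauchy modulus of `x`. -/
def CauchyModulus {X : Type*} [MetricSpace X] (x : ℕ → X) (g : ℕ → ℕ) : Prop :=
  ∀ n l m : ℕ, g n ≤ l → g n ≤ m → dist (x l) (x m) ≤ (2 : ℝ)⁻¹ ^ n

/-- `x` is computably Cauchy. -/
def ComputablyCauchy {X : Type*} [MetricSpace X] (x : ℕ → X) : Prop :=
  ∃ g : ℕ → ℕ, Computable g ∧ CauchyModulus x g

/-- A real sequence converges computably to `0`. -/
def CCto0 (y : ℕ → ℝ) : Prop :=
  ∃ g : ℕ → ℕ, Computable g ∧ ∀ n m : ℕ, g n ≤ m → |y m| ≤ (2 : ℝ)⁻¹ ^ n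

/-- `x` is nearly computably Cauchy. -/
def NCC {X : Type*} [MetricSpace X] (x : ℕ → X) : Prop :=
  ∀ r : ℕ → ℕ, Computable r → StrictMono r →
    CCto0 (fun n => dist (x (r (n + 1))) (x (r n)))

theorem stmt4 (x : ℕ → ℝ) (hx : Monotone x) (s : ℕ → ℕ) (hs : Computable s)
    (hsinf : Filter.Tendsto s Filter.atTop Filter.atTop)
    (h : CCto0 (fun n => x (s (n + 1)) - x (s n))) :
    CCto0 (fun n => x (n + 1) - x n) := by
  obtain ⟨g, hg, hgm⟩ := h
  refine ⟨fun n => s (g n), hs.comp hg, ?_⟩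
  intro n m hm
  simp only at hm hgm ⊢
  obtain ⟨k0, hk0⟩ := Filter.eventually_atTop.mp (hsinf.eventually_ge_atTop (m + 1))
  have hgk0 : g n ≤ k0 := by
    by_contra h'
    push_neg at h'
    have := hk0 (g n) h'.le
    omega
  set k := Nat.findGreatest (fun j => s j ≤ m) k0 with hk
  have hPk : s k ≤ m := Nat.findGreatest_spec (P := fun j => s j ≤ m) (m := g n) hgk0 hm
  have hkge : g n ≤ k := Nat.le_findGreatest hgk0 hm
  have hk1 : m + 1 ≤ s (k + 1) := by
    rcases le_or_gt (k + 1) k0 with h1 | h1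
    · by_contra h2
      push_neg at h2
      exact Nat.findGreatest_is_greatest (Nat.lt_succ_self k) h1 (Nat.lt_succ_iff.mp h2)
    · exact hk0 _ h1.le
  have h3 := hgm n k hkge
  have hmono : x m ≤ x (m + 1) := hx (Nat.le_succ m)
  rw [abs_of_nonneg (sub_nonneg.mpr hmono)]
  have h4 : x (m + 1) - x m ≤ x (s (k + 1)) - x (s k) := by
    have := hx hPk
    have := hx hk1
    linarith
  calc x (m + 1) - x m ≤ x (s (k + 1)) - x (s k) := h4
    _ ≤ |x (s (k + 1)) - x (s k)| := le_abs_self _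
    _ ≤ (2 : ℝ)⁻¹ ^ n := h3
end

section
/- For a sequence (x_n) in a metric space, the following are equivalent: (a) for every computable strictly increasing r: ℕ → ℕ, the sequence (d(x_{r(n+1)}, x_{r(n)}))_n converges computably to 0; (b) the same holds for every computable nondecreasing unbounded r; (c) the same holds for every computable nondecreasing r. -/
open Filter Topology

lemma computable_nat_find {p : ℕ → ℕ → Prop} [∀ a n : ℕ, Decidable (p a n)]
    (hp : Computable₂ fun a n => decide (p a n)) (h : ∀ a, ∃ n, p a n) :
    Computable fun a => Nat.find (h a) := by
  have hpart : Partrec fun a => Nat.rfind fun n => (Part.some (decide (p a n)) : Part Bool) :=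
    Partrec.rfind hp.partrec₂
  apply hpart.of_eq_tot
  intro a
  apply Nat.mem_rfind.2
  exact ⟨by simpa using Nat.find_spec (h a), fun {m} hm => by simpa using Nat.find_min (h a) hm⟩

lemma mono_bdd_eventually_const {r : ℕ → ℕ} (hm : Monotone r) :
    ∀ M : ℕ, (∀ n, r n ≤ M) → ∃ N, ∀ m, N ≤ m → r m = r N := by
  intro M
  induction M with
  | zero =>
    intro hb
    exact ⟨0, fun m _ => by have h0 := hb m; have h1 := hb 0; omega⟩
  | succ M ih =>
    intro hb
    by_cases hx : ∃ n, r n = M + 1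
    · obtain ⟨n, hn⟩ := hx
      refine ⟨n, fun m hm' => ?_⟩
      have h1 := hm hm'
      have h2 := hb m
      omega
    · push_neg at hx
      exact ih (fun n => by have := hb n; have := hx n; omega)

lemma hardAB {X : Type*} [MetricSpace X] (x : ℕ → X)
    (hA : ∀ r : ℕ → ℕ, Computable r → StrictMono r →
        CCto0 (fun n => dist (x (r (n + 1))) (x (r n))))
    (r : ℕ → ℕ) (hrc : Computable r) (hrm : Monotone r)
    (hru : ∀ M : ℕ, ∃ n : ℕ, M ≤ r n) :
    CCto0 (fun n => dist (x (r (n + 1))) (x (r n))) := by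
  -- jumps exist beyond every point
  have hjump : ∀ p : ℕ, ∃ n : ℕ, p ≤ n ∧ r n < r (n + 1) := by
    intro p
    by_contra hc
    push_neg at hc
    have hconst : ∀ m, r (p + m) = r p := by
      intro m
      induction m with
      | zero => rfl
      | succ k ih =>
        have h1 := hc (p + k) (Nat.le_add_right _ _)
        have h2 : r (p + k) ≤ r (p + k + 1) := hrm (by omega)
        have : p + (k + 1) = (p + k) + 1 := rfl
        rw [this]
        omega
    obtain ⟨n, hn⟩ := hru (r p + 1)
    rcases le_or_gt n p with h | h
    · have := hrm h; omega
    · have := hconst (n - p)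
      rw [show p + (n - p) = n by omega] at this
      omega
  -- the "next jump ≥ p" function
  set F : ℕ → ℕ := fun p => Nat.find (hjump p) with hF
  have hFc : Computable F := by
    apply computable_nat_find
    have h1 : Computable fun q : ℕ × ℕ => decide (q.1 ≤ q.2) :=
      Primrec.nat_le.decide.to_comp.comp Computable.fst Computable.snd
    have h2 : Computable fun q : ℕ × ℕ => decide (r q.2 < r (q.2 + 1)) :=
      Primrec.nat_lt.decide.to_comp.comp (hrc.comp Computable.snd)
        (hrc.comp (Computable.succ.comp Computable.snd))
    have h3 : Computable fun q : ℕ × ℕ => (decide (q.1 ≤ q.2) && decide (r q.2 < r (q.2 + 1))) :=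
      Primrec.and.to_comp.comp h1 h2
    have h4 : Computable fun q : ℕ × ℕ => decide (q.1 ≤ q.2 ∧ r q.2 < r (q.2 + 1)) :=
      h3.of_eq fun q => by simp
    exact h4.to₂
  have Fge : ∀ p, p ≤ F p := fun p => (Nat.find_spec (hjump p)).1
  have Fjump : ∀ p, r (F p) < r (F p + 1) := fun p => (Nat.find_spec (hjump p)).2
  have Fmin : ∀ p n, p ≤ n → n < F p → ¬ r n < r (n + 1) := by
    intro p n hpn hn hlt
    exact Nat.find_min (hjump p) hn ⟨hpn, hlt⟩
  -- enumeration of jump indices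
  set t : ℕ → ℕ := fun k => Nat.rec (F 0) (fun _ prev => F (prev + 1)) k with ht
  have ht0 : t 0 = F 0 := rfl
  have htS : ∀ k, t (k + 1) = F (t k + 1) := fun k => rfl
  have htc : Computable t := by
    have := Computable.nat_rec (f := fun k : ℕ => k) (g := fun _ : ℕ => F 0)
      (h := fun (_ : ℕ) (p : ℕ × ℕ) => F (p.2 + 1)) Computable.id (Computable.const _)
      ((hFc.comp (Computable.succ.comp (Computable.snd.comp Computable.snd))).to₂)
    exact this.of_eq fun k => rfl
  have htjump : ∀ k, r (t k) < r (t k + 1) := by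
    intro k
    cases k with
    | zero => exact Fjump 0
    | succ k => rw [htS]; exact Fjump _
  have htmono : StrictMono t := by
    apply strictMono_nat_of_lt_succ
    intro k
    have := Fge (t k + 1)
    rw [htS]; omega
  have htconst : ∀ k, r (t (k + 1)) = r (t k + 1) := by
    intro k
    have hle : t k + 1 ≤ t (k + 1) := by rw [htS]; exact Fge _
    suffices H : ∀ d, t k + 1 + d ≤ t (k + 1) → r (t k + 1 + d) = r (t k + 1) by
      have := H (t (k + 1) - (t k + 1)) (by omega)
      rwa [show t k + 1 + (t (k + 1) - (t k + 1)) = t (k + 1) by omega] at this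
    intro d
    induction d with
    | zero => simp
    | succ e ih =>
      intro hle2
      have h1 := ih (by omega)
      have hlt : t k + 1 + e < F (t k + 1) := by rw [← htS]; omega
      have hnj := Fmin (t k + 1) (t k + 1 + e) (by omega) hlt
      have h2 : r (t k + 1 + e) ≤ r (t k + 1 + e + 1) := hrm (by omega)
      have h3 : r (t k + 1 + e + 1) = r (t k + 1 + e) := by omega
      rw [show t k + 1 + (e + 1) = t k + 1 + e + 1 from rfl, h3, h1]
  -- every jump index is some t k
  have hjumpidx : ∀ m, r m < r (m + 1) → ∃ k, m = t k := by
    intro m hjm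
    rcases lt_or_ge m (t 0) with h | h
    · exact absurd hjm (by rw [ht0] at h; exact Fmin 0 m (Nat.zero_le _) h)
    · set K := Nat.findGreatest (fun k => t k ≤ m) m with hK
      have hPK : t K ≤ m :=
        Nat.findGreatest_spec (P := fun k => t k ≤ m) (m := 0) (Nat.zero_le m) h
      rcases le_or_gt (K + 1) m with hKm | hKm
      · have hgt : ¬ t (K + 1) ≤ m :=
          Nat.findGreatest_is_greatest (P := fun k => t k ≤ m) (K.lt_succ_self) hKm
        push_neg at hgt
        rcases eq_or_lt_of_le hPK with he | hlt
        · exact ⟨K, he.symm⟩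
        · have : m < F (t K + 1) := by rw [← htS]; omega
          exact absurd hjm (Fmin (t K + 1) m (by omega) this)
      · have h5 : K ≤ t K := htmono.le_apply
        exact ⟨K, by omega⟩
  -- apply hypothesis to s = r ∘ t
  have hsc : Computable (fun k => r (t k)) := hrc.comp htc
  have hsm : StrictMono (fun k => r (t k)) := by
    apply strictMono_nat_of_lt_succ
    intro k
    calc r (t k) < r (t k + 1) := htjump k
    _ ≤ r (t (k + 1)) := hrm (Nat.succ_le_of_lt (htmono (Nat.lt_succ_self k)))
  obtain ⟨g, hgc, hg⟩ := hA _ hsc hsm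
  refine ⟨fun n => t (g n), htc.comp hgc, fun n m hm => ?_⟩
  simp only
  rcases lt_or_ge (r m) (r (m + 1)) with hj | hj
  · obtain ⟨k, hk⟩ := hjumpidx m hj
    subst hk
    have hgk : g n ≤ k := (htmono.le_iff_le).1 hm
    have := hg n k hgk
    simp only at this
    rwa [htconst k] at this
  · have heq : r (m + 1) = r m := le_antisymm hj (hrm (Nat.le_succ m))
    rw [heq, dist_self, abs_zero]
    positivity

theorem stmt7 {X : Type*} [MetricSpace X] (x : ℕ → X) :
    ((∀ r : ℕ → ℕ, Computable r → StrictMono r →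
        CCto0 (fun n => dist (x (r (n + 1))) (x (r n)))) ↔
      (∀ r : ℕ → ℕ, Computable r → Monotone r → (∀ M : ℕ, ∃ n : ℕ, M ≤ r n) →
        CCto0 (fun n => dist (x (r (n + 1))) (x (r n))))) ∧
    ((∀ r : ℕ → ℕ, Computable r → Monotone r → (∀ M : ℕ, ∃ n : ℕ, M ≤ r n) →
        CCto0 (fun n => dist (x (r (n + 1))) (x (r n)))) ↔
      (∀ r : ℕ → ℕ, Computable r → Monotone r →
        CCto0 (fun n => dist (x (r (n + 1))) (x (r n))))) := by
  have hBA : (∀ r : ℕ → ℕ, Computable r → Monotone r → (∀ M : ℕ, ∃ n : ℕ, M ≤ r n) →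
        CCto0 (fun n => dist (x (r (n + 1))) (x (r n)))) →
      (∀ r : ℕ → ℕ, Computable r → StrictMono r →
        CCto0 (fun n => dist (x (r (n + 1))) (x (r n)))) :=
    fun hB r hrc hrm => hB r hrc hrm.monotone (fun M => ⟨M, hrm.le_apply⟩)
  have hBC : (∀ r : ℕ → ℕ, Computable r → Monotone r → (∀ M : ℕ, ∃ n : ℕ, M ≤ r n) →
        CCto0 (fun n => dist (x (r (n + 1))) (x (r n)))) →
      (∀ r : ℕ → ℕ, Computable r → Monotone r →
        CCto0 (fun n => dist (x (r (n + 1))) (x (r n)))) := by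
    intro hB r hrc hrm
    by_cases hu : ∀ M : ℕ, ∃ n : ℕ, M ≤ r n
    · exact hB r hrc hrm hu
    · push_neg at hu
      obtain ⟨M, hM⟩ := hu
      obtain ⟨N, hN⟩ := mono_bdd_eventually_const hrm M (fun n => (hM n).le)
      refine ⟨fun _ => N, Computable.const N, fun n m hm => ?_⟩
      have hm' : N ≤ m := hm
      simp only
      rw [hN (m + 1) (by omega), hN m hm', dist_self, abs_zero]
      positivity
  exact ⟨⟨fun hA => hardAB x hA, hBA⟩,
    ⟨hBC, fun hC r hrc hrm _ => hC r hrc hrm⟩⟩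
end

section
/- Let X be a normed vector space and (x_n) a sequence in X. If for every computable strictly increasing r: ℕ → ℕ the sequence (x_{r(n+1)} − x_{r(n)})_n is computably Cauchy, then for every computable strictly increasing r: ℕ → ℕ the sequence (x_{r(n+1)} − x_{r(n)})_n converges computably to 0. -/
open Filter Topology

theorem stmt8 {X : Type*} [NormedAddCommGroup X] [NormedSpace ℝ X] (x : ℕ → X)
    (h : ∀ r : ℕ → ℕ, Computable r → StrictMono r →
      ComputablyCauchy (fun n => x (r (n + 1)) - x (r n))) :
    ∀ r : ℕ → ℕ, Computable r → StrictMono r →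
      CCto0 (fun n => ‖x (r (n + 1)) - x (r n)‖) := by
  intro r hrc hrm
  obtain ⟨g, hgc, hg⟩ := h r hrc hrm
  set y : ℕ → X := fun n => x (r (n + 1)) - x (r n) with hy
  -- the sparse sequence of indices
  set t : ℕ → ℕ := fun n =>
    Nat.rec (motive := fun _ => ℕ) (g 0) (fun k ih => ih + k + 1 + g (k + 1)) n with ht
  have hts : ∀ n, t (n + 1) = t n + n + 1 + g (n + 1) := fun n => rfl
  have htmono : StrictMono t := by
    apply strictMono_nat_of_lt_succ
    intro n
    rw [hts]
    omega
  have htg : ∀ n, g n ≤ t n := by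
    intro n
    cases n with
    | zero => exact le_refl _
    | succ k => rw [hts]; omega
  have htc : Computable t := by
    have hadd : Computable₂ ((· + ·) : ℕ → ℕ → ℕ) := Primrec.nat_add.to_comp
    have h1 : Computable fun q : ℕ × ℕ × ℕ => q.2.1 := Computable.fst.comp Computable.snd
    have h2 : Computable fun q : ℕ × ℕ × ℕ => q.2.2 := Computable.snd.comp Computable.snd
    have h3 : Computable fun q : ℕ × ℕ × ℕ => g (q.2.1 + 1) :=
      hgc.comp (hadd.comp h1 (Computable.const 1))
    have hh : Computable₂ fun (_ : ℕ) (p : ℕ × ℕ) => p.2 + p.1 + 1 + g (p.1 + 1) :=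
      hadd.comp (hadd.comp (hadd.comp h2 h1) (Computable.const 1)) h3
    exact Computable.nat_rec Computable.id (Computable.const (g 0)) hh
  obtain ⟨g₂, hg₂c, hg₂⟩ := h (fun n => r (t n)) (hrc.comp htc) (hrm.comp htmono)
  set z : ℕ → X := fun n => x (r (t (n + 1))) - x (r (t n)) with hz
  set M : ℝ := ‖z (g₂ 0)‖ + 1 with hMdef
  have hM0 : 0 ≤ M := by positivity
  have hM : ∀ n, g₂ 0 ≤ n → ‖z n‖ ≤ M := by
    intro n hn
    have h1 := hg₂ 0 n (g₂ 0) hn (le_refl _)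
    simp only [pow_zero] at h1
    rw [dist_eq_norm] at h1
    have h2 := norm_sub_norm_le (z n) (z (g₂ 0))
    simp only [hz] at h1 h2 ⊢
    linarith
  -- key bound on ‖y (t n)‖
  have key : ∀ n, g₂ 0 ≤ n → ‖y (t n)‖ ≤ M / (n + 1) + (2 : ℝ)⁻¹ ^ n := by
    intro n hn
    set N : ℕ := t (n + 1) - t n with hNd
    have hNge : n + 1 ≤ N := by rw [hNd, hts]; omega
    have hNpos : (0 : ℝ) < N := by
      have : 0 < N := by omega
      exact_mod_cast this
    have hle : t n ≤ t (n + 1) := (htmono (Nat.lt_succ_self n)).le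
    have hsum : z n = ∑ i ∈ Finset.range N, y (t n + i) := by
      have htele := Finset.sum_range_sub (f := fun i => x (r (t n + i))) N
      have hNt : t n + N = t (n + 1) := by omega
      simp only [Nat.add_zero, hNt] at htele
      rw [show z n = x (r (t (n + 1))) - x (r (t n)) from rfl, ← htele]
      exact Finset.sum_congr rfl fun i _ => rfl
    have h1 : ‖z n - N • y (t n)‖ ≤ (N : ℝ) * (2 : ℝ)⁻¹ ^ n := by
      have : z n - N • y (t n) = ∑ i ∈ Finset.range N, (y (t n + i) - y (t n)) := by
        rw [Finset.sum_sub_distrib, ← hsum, Finset.sum_const, Finset.card_range]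
      rw [this]
      calc ‖∑ i ∈ Finset.range N, (y (t n + i) - y (t n))‖
          ≤ ∑ i ∈ Finset.range N, ‖y (t n + i) - y (t n)‖ := norm_sum_le _ _
        _ ≤ ∑ _i ∈ Finset.range N, (2 : ℝ)⁻¹ ^ n := by
            apply Finset.sum_le_sum
            intro i _
            have := hg n (t n + i) (t n) (le_trans (htg n) (Nat.le_add_right _ _)) (htg n)
            rw [dist_eq_norm] at this
            exact this
        _ = (N : ℝ) * (2 : ℝ)⁻¹ ^ n := by rw [Finset.sum_const, Finset.card_range, nsmul_eq_mul]
    have h2 : (N : ℝ) * ‖y (t n)‖ ≤ M + (N : ℝ) * (2 : ℝ)⁻¹ ^ n := by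
      have hns : ‖N • y (t n)‖ = (N : ℝ) * ‖y (t n)‖ := by
        rw [← Nat.cast_smul_eq_nsmul ℝ, norm_smul]
        simp
      have h3 : ‖N • y (t n)‖ - ‖z n‖ ≤ ‖z n - N • y (t n)‖ := by
        exact (norm_sub_norm_le _ _).trans_eq (norm_sub_rev _ _)
      have h4 := hM n hn
      linarith
    have h5 : ‖y (t n)‖ ≤ M / N + (2 : ℝ)⁻¹ ^ n := by
      rw [div_add' _ _ _ (ne_of_gt hNpos), le_div_iff₀ hNpos]
      ring_nf
      ring_nf at h2
      linarith
    have h6 : M / (N : ℝ) ≤ M / (n + 1) := by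
      apply div_le_div_of_nonneg_left hM0 (by positivity)
      exact_mod_cast hNge
    linarith
  -- ‖y (t n)‖ tends to 0
  have hA : Tendsto (fun n : ℕ => M / (n + 1) + (2 : ℝ)⁻¹ ^ n) atTop (𝓝 0) := by
    have h1 : Tendsto (fun n : ℕ => M / (n + 1)) atTop (𝓝 0) := by
      have := (tendsto_const_div_atTop_nhds_zero_nat M).comp (tendsto_add_atTop_nat 1)
      exact this.congr fun n => by push_cast [Function.comp]; ring
    have h2 : Tendsto (fun n : ℕ => (2 : ℝ)⁻¹ ^ n) atTop (𝓝 0) :=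
      tendsto_pow_atTop_nhds_zero_of_lt_one (by norm_num) (by norm_num)
    simpa using h1.add h2
  have hY : Tendsto (fun n => ‖y (t n)‖) atTop (𝓝 0) := by
    apply squeeze_zero' (Eventually.of_forall fun n => norm_nonneg _) _ hA
    filter_upwards [eventually_ge_atTop (g₂ 0)] with n hn
    exact key n hn
  -- conclude
  refine ⟨fun n => g (n + 1), hgc.comp (Primrec.succ.to_comp), ?_⟩
  intro n m hm
  simp only [abs_norm]
  have hkey : ‖y m‖ - (2 : ℝ)⁻¹ ^ (n + 1) ≤ 0 := by
    apply ge_of_tendsto hY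
    filter_upwards [eventually_ge_atTop (g (n + 1))] with k hk
    have htk : g (n + 1) ≤ t k := le_trans hk htmono.le_apply
    have h1 := hg (n + 1) m (t k) hm htk
    rw [dist_eq_norm] at h1
    have h2 := norm_sub_norm_le (y m) (y (t k))
    simp only [hy] at h1 h2 ⊢
    linarith
  have hpow : (2 : ℝ)⁻¹ ^ (n + 1) ≤ (2 : ℝ)⁻¹ ^ n :=
    pow_le_pow_of_le_one (by norm_num) (by norm_num) (Nat.le_succ n)
  simp only [hy] at hkey ⊢
  linarith
end

section
/- Let (x_n) and (y_n) be sequences in a metric space such that the real sequence (d(x_n, y_n))_n converges computably to 0. Then (x_n) is nearly computably Cauchy if and only if (y_n) is nearly computably Cauchy. -/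
open Filter Topology

lemma ncc_aux {X : Type*} [MetricSpace X] (x y : ℕ → X)
    (h : CCto0 (fun n => dist (x n) (y n))) (hx : NCC x) : NCC y := by
  intro r hr hsm
  obtain ⟨g, hgc, hg⟩ := h
  obtain ⟨f, hfc, hf⟩ := hx r hr hsm
  refine ⟨fun n => max (f (n + 2)) (g (n + 2)), ?_, ?_⟩
  · exact Primrec.nat_max.to_comp.comp
      (hfc.comp (Computable.succ.comp Computable.succ))
      (hgc.comp (Computable.succ.comp Computable.succ))
  · intro n m hm
    have hm1 : f (n + 2) ≤ m := le_trans (le_max_left _ _) hm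
    have hm2 : g (n + 2) ≤ m := le_trans (le_max_right _ _) hm
    have h1 := hf (n + 2) m hm1
    have h2 := hg (n + 2) (r m) (le_trans hm2 hsm.le_apply)
    have h3 := hg (n + 2) (r (m + 1))
      (le_trans hm2 (le_trans (Nat.le_succ m) hsm.le_apply))
    simp only [abs_of_nonneg dist_nonneg] at h1 h2 h3 ⊢
    have tri : dist (y (r (m + 1))) (y (r m)) ≤
        dist (y (r (m + 1))) (x (r (m + 1))) + dist (x (r (m + 1))) (x (r m)) +
        dist (x (r m)) (y (r m)) := dist_triangle4 _ _ _ _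
    rw [dist_comm (y (r (m + 1))) (x (r (m + 1)))] at tri
    have hp : (2 : ℝ)⁻¹ ^ (n + 2) * 3 ≤ (2 : ℝ)⁻¹ ^ n := by
      have : (0 : ℝ) < (2 : ℝ)⁻¹ ^ n := by positivity
      ring_nf
      nlinarith
    calc dist (y (r (m + 1))) (y (r m)) ≤ _ := tri
      _ ≤ (2 : ℝ)⁻¹ ^ (n + 2) + (2 : ℝ)⁻¹ ^ (n + 2) + (2 : ℝ)⁻¹ ^ (n + 2) := by
          gcongr
      _ ≤ (2 : ℝ)⁻¹ ^ n := by linarith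

theorem stmt11 {X : Type*} [MetricSpace X] (x y : ℕ → X)
    (h : CCto0 (fun n => dist (x n) (y n))) : NCC x ↔ NCC y := by
  have h' : CCto0 (fun n => dist (y n) (x n)) := by
    obtain ⟨g, hc, hb⟩ := h
    exact ⟨g, hc, fun n m hm => by simpa [dist_comm] using hb n m hm⟩
  exact ⟨ncc_aux x y h, ncc_aux y x h'⟩
end

section
/- Let (x_n) be a nearly computably Cauchy sequence in a metric space and s: ℕ → ℕ a computable nondecreasing unbounded function. Then the sequence (x_{s(n)})_n is nearly computably Cauchy. -/
open Filter Topology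

/-- For a monotone, computable, unbounded `u`, consecutive distances along `u`
converge computably to `0` whenever `x` is nearly computably Cauchy. -/
lemma ncc_mono_aux {X : Type*} [MetricSpace X] (x : ℕ → X) (hx : NCC x)
    (u : ℕ → ℕ) (hu : Computable u) (humono : Monotone u)
    (huunb : ∀ M : ℕ, ∃ n : ℕ, M ≤ u n) :
    CCto0 (fun n => dist (x (u (n + 1))) (x (u n))) := by
  have hex : ∀ a : ℕ, ∃ m : ℕ, u a < u (a + 1 + m) := by
    intro a
    obtain ⟨n, hn⟩ := huunb (u a + 1)
    have han : a < n := by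
      by_contra h
      push_neg at h
      have := humono h
      omega
    refine ⟨n - a - 1, ?_⟩
    have h1 : a + 1 + (n - a - 1) = n := by omega
    rw [h1]; omega
  set next : ℕ → ℕ := fun a => a + 1 + Nat.find (hex a) with hnextdef
  have hlt : ∀ a, u a < u (next a) := fun a => Nat.find_spec (hex a)
  have hagt : ∀ a, a < next a := fun a => by simp only [hnextdef]; omega
  have hconst : ∀ a i, a ≤ i → i < next a → u i = u a := by
    intro a i h1 h2
    refine le_antisymm ?_ (humono h1)
    by_contra h
    push_neg at h
    have hia : a < i := by
      rcases lt_or_ge a i with h' | h'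
      · exact h'
      · exact absurd (humono h') (by omega)
    have hmin := Nat.find_min (hex a) (m := i - a - 1)
      (by simp only [hnextdef] at h2; omega)
    apply hmin
    have : a + 1 + (i - a - 1) = i := by omega
    rw [this]; exact h
  -- computability of `next`
  have hpc : Computable₂ (fun a m => (decide (u a < u (a + 1 + m)) : Bool)) := by
    have h1 : Computable (fun p : ℕ × ℕ => u p.1) := hu.comp Computable.fst
    have h2 : Computable (fun p : ℕ × ℕ => u (p.1 + 1 + p.2)) := by
      apply hu.comp
      exact Primrec.to_comp (Primrec.nat_add.comp
        (Primrec.succ.comp Primrec.fst) Primrec.snd)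
    exact Primrec.nat_lt.decide.to_comp.comp h1 h2
  have hfindc : Computable (fun a => Nat.find (hex a)) := by
    have hrf : Partrec (fun a =>
        Nat.rfind (fun m => Part.some (decide (u a < u (a + 1 + m))))) :=
      Partrec.rfind hpc.partrec₂
    apply hrf.of_eq_tot
    intro a
    apply Nat.mem_rfind.2
    constructor
    · simp [Nat.find_spec (hex a)]
    · intro m hm
      simp [Nat.find_min (hex a) hm]
  have hnextc : Computable next := by
    have : Computable (fun a : ℕ => a + 1 + Nat.find (hex a)) :=
      Primrec.nat_add.to_comp.comp (Primrec.succ.to_comp) hfindc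
    exact this
  -- the jump sequence
  set j : ℕ → ℕ := fun k => Nat.rec 0 (fun _ IH => next IH) k with hjdef
  have hj0 : j 0 = 0 := rfl
  have hjs : ∀ k, j (k + 1) = next (j k) := fun k => rfl
  have hjc : Computable j := by
    have := Computable.nat_rec (f := fun a : ℕ => a) (g := fun _ : ℕ => (0 : ℕ))
      (h := fun (_ : ℕ) (p : ℕ × ℕ) => next p.2) Computable.id (Computable.const 0)
      (hnextc.comp (Computable.snd.comp Computable.snd))
    exact this
  have hjmono : StrictMono j := strictMono_nat_of_lt_succ fun k => by
    rw [hjs]; exact hagt (j k)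
  -- the strictly increasing sequence of distinct values
  have hr2c : Computable (fun k => u (j k)) := hu.comp hjc
  have hr2mono : StrictMono (fun k => u (j k)) := strictMono_nat_of_lt_succ fun k => by
    simp only [hjs]; exact hlt (j k)
  obtain ⟨g, hgc, hg⟩ := hx (fun k => u (j k)) hr2c hr2mono
  refine ⟨fun n => j (g n), hjc.comp hgc, ?_⟩
  intro n m hm
  -- find the greatest k with j k ≤ m
  have hek : ∃ k, m < j (k + 1) := ⟨m, lt_of_lt_of_le (Nat.lt_succ_self m) hjmono.le_apply⟩
  set k := Nat.find hek with hkdef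
  have hk2 : m < j (k + 1) := Nat.find_spec hek
  have hk1 : j k ≤ m := by
    rcases Nat.eq_zero_or_pos k with h0 | hpos
    · rw [h0, hj0]; omega
    · have hmin := Nat.find_min hek (m := k - 1) (by omega)
      rw [show k - 1 + 1 = k by omega] at hmin
      omega
  have hgk : g n ≤ k := by
    have h1 : j (g n) < j (k + 1) := lt_of_le_of_lt hm hk2
    have := (hjmono.lt_iff_lt (a := g n) (b := k + 1)).mp h1
    omega
  have hum : u m = u (j k) := hconst (j k) m hk1 (by rw [← hjs]; exact hk2)
  simp only
  rcases lt_or_eq_of_le (Nat.succ_le_of_lt hk2) with hcase | hcase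
  · -- u (m+1) = u (j k) too, distance is zero
    have hum1 : u (m + 1) = u (j k) :=
      hconst (j k) (m + 1) (by omega) (by rw [← hjs]; exact hcase)
    rw [hum, hum1, dist_self, abs_zero]
    positivity
  · -- m + 1 = j (k+1)
    have hum1 : u (m + 1) = u (j (k + 1)) := congrArg u hcase
    rw [hum, hum1]
    exact hg n k hgk

theorem stmt12 {X : Type*} [MetricSpace X] (x : ℕ → X) (hx : NCC x)
    (s : ℕ → ℕ) (hs : Computable s) (hmono : Monotone s)
    (hunb : ∀ M : ℕ, ∃ n : ℕ, M ≤ s n) : NCC (fun n => x (s n)) := by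
  intro r hr hrmono
  have hu : Computable (fun n => s (r n)) := hs.comp hr
  have humono : Monotone (fun n => s (r n)) := hmono.comp hrmono.monotone
  have huunb : ∀ M : ℕ, ∃ n : ℕ, M ≤ s (r n) := by
    intro M
    obtain ⟨n, hn⟩ := hunb M
    exact ⟨n, le_trans hn (hmono hrmono.le_apply)⟩
  exact ncc_mono_aux x hx (fun n => s (r n)) hu humono huunb
end

section
/- If (x_n) and (y_n) are nearly computably Cauchy sequences in a normed vector space, then (x_n + y_n)_n is nearly computably Cauchy; moreover, for any real λ, (λ·x_n)_n is nearly computably Cauchy. Thus the nearly computably Cauchy sequences form a sub vector space of the space of all sequences. -/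
open Filter Topology

theorem stmt13 {X : Type*} [NormedAddCommGroup X] [NormedSpace ℝ X] (x y : ℕ → X)
    (hx : NCC x) (hy : NCC y) :
    NCC (fun n => x n + y n) ∧ ∀ c : ℝ, NCC (fun n => c • x n) := by
  constructor
  · intro r hr hmono
    obtain ⟨g, hgc, hg⟩ := hx r hr hmono
    obtain ⟨h, hhc, hh⟩ := hy r hr hmono
    refine ⟨fun n => max (g (n + 1)) (h (n + 1)), ?_, ?_⟩
    · exact Primrec.nat_max.to_comp.comp (hgc.comp Primrec.succ.to_comp)
        (hhc.comp Primrec.succ.to_comp)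
    · intro n m hm
      simp only [le_max_iff, max_le_iff] at hm
      have h1 := hg (n + 1) m hm.1
      have h2 := hh (n + 1) m hm.2
      simp only [Real.dist_eq, sub_zero, abs_abs, dist_eq_norm] at *
      have : ‖x (r (m + 1)) + y (r (m + 1)) - (x (r m) + y (r m))‖ ≤
          ‖x (r (m + 1)) - x (r m)‖ + ‖y (r (m + 1)) - y (r m)‖ := by
        have := norm_add_le (x (r (m + 1)) - x (r m)) (y (r (m + 1)) - y (r m))
        calc _ = ‖(x (r (m + 1)) - x (r m)) + (y (r (m + 1)) - y (r m))‖ := by congr 1; abel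
          _ ≤ _ := this
      rw [abs_of_nonneg (norm_nonneg _)]
      rw [abs_le] at h1 h2
      calc _ ≤ ‖x (r (m + 1)) - x (r m)‖ + ‖y (r (m + 1)) - y (r m)‖ := this
        _ ≤ (2 : ℝ)⁻¹ ^ (n + 1) + (2 : ℝ)⁻¹ ^ (n + 1) := add_le_add h1.2 h2.2
        _ = (2 : ℝ)⁻¹ ^ n := by ring
  · intro c r hr hmono
    obtain ⟨g, hgc, hg⟩ := hx r hr hmono
    obtain ⟨k, hk⟩ := pow_unbounded_of_one_lt |c| (by norm_num : (1:ℝ) < 2)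
    refine ⟨fun n => g (n + k), ?_, ?_⟩
    · exact hgc.comp ((Primrec.nat_add.comp .id (Primrec.const k)).to_comp)
    · intro n m hm
      have h1 := hg (n + k) m hm
      simp only [Real.dist_eq, sub_zero, abs_abs, dist_eq_norm] at *
      rw [abs_of_nonneg (norm_nonneg _), ← smul_sub, norm_smul, Real.norm_eq_abs]
      rw [abs_le] at h1
      calc |c| * ‖x (r (m + 1)) - x (r m)‖ ≤ (2:ℝ)^k * (2 : ℝ)⁻¹ ^ (n + k) := by
            apply mul_le_mul hk.le h1.2 (norm_nonneg _) (by positivity)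
        _ = (2 : ℝ)⁻¹ ^ n := by
            rw [pow_add, inv_pow, inv_pow]; field_simp
end

section
/- Let α be a left-computable real number. Then α is nearly computable if and only if for every strictly increasing computable sequence (a_n) of rational numbers converging to α, the sequence (a_{n+1} − a_n)_n converges computably to 0. -/
open Filter Topology

/-- `α` is a nearly computable real number. -/
def NearlyCompReal (α : ℝ) : Prop :=
  ∃ a : ℕ → ℚ, Computable a ∧
    Filter.Tendsto (fun n => (a n : ℝ)) Filter.atTop (nhds α) ∧
    NCC (fun n => (a n : ℝ))


namespace Stmt18Aux

noncomputable section

open Encodable Filter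

/-! ### gcd is primitive recursive -/

def gstep : ℕ × ℕ → ℕ × ℕ := fun p => if p.1 = 0 then p else (p.2 % p.1, p.1)

lemma gstep_zero (y : ℕ) : ∀ k, gstep^[k] (0, y) = (0, y) := by
  intro k; induction k with
  | zero => rfl
  | succ k ih => rw [Function.iterate_succ_apply, show gstep (0,y) = (0,y) from rfl, ih]

lemma gstep_gcd : ∀ k x y, x < k → (gstep^[k] (x, y)).2 = Nat.gcd x y := by
  intro k
  induction k with
  | zero => omega
  | succ k ih =>
    intro x y hx
    rcases Nat.eq_zero_or_pos x with h | h
    · subst h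
      rw [Function.iterate_succ_apply, show gstep (0,y) = (0,y) from rfl, gstep_zero]
      simp
    · rw [Function.iterate_succ_apply, show gstep (x,y) = (y % x, x) from if_neg (by omega),
        ih _ _ (lt_of_lt_of_le (Nat.mod_lt _ h) (by omega))]
      exact (Nat.gcd_rec x y).symm

lemma primrec_gcd : Primrec₂ Nat.gcd := by
  have hstep : Primrec gstep :=
    Primrec.ite (Primrec.eq.comp Primrec.fst (Primrec.const 0)) Primrec.id
      (Primrec.pair (Primrec.nat_mod.comp Primrec.snd Primrec.fst) Primrec.fst)
  have h : Primrec fun p : ℕ × ℕ => (gstep^[p.1 + 1] p).2 :=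
    Primrec.snd.comp
      (Primrec.nat_iterate (Primrec.succ.comp Primrec.fst) Primrec.id
        (Primrec₂.mk (hstep.comp Primrec.snd)))
  exact Primrec₂.mk (h.of_eq fun p => gstep_gcd _ _ _ (Nat.lt_succ_self _))

/-! ### integer codes -/

def intCode : ℤ → ℕ
  | .ofNat n => 2 * n
  | .negSucc n => 2 * n + 1

def intMag : ℕ → ℕ := fun c => if c % 2 = 0 then c / 2 else c / 2 + 1

def intNegB : ℕ → Bool := fun c => decide (c % 2 = 1)

def intDecode : ℕ → ℤ := fun c => if c % 2 = 0 then Int.ofNat (c / 2) else Int.negSucc (c / 2)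

lemma intMag_intCode (z : ℤ) : intMag (intCode z) = z.natAbs := by
  cases z with
  | ofNat n =>
    dsimp only [intCode, intMag, Int.natAbs]
    split <;> omega
  | negSucc n =>
    dsimp only [intCode, intMag, Int.natAbs]
    split <;> omega

lemma intNegB_intCode (z : ℤ) : intNegB (intCode z) = decide (z < 0) := by
  cases z with
  | ofNat n =>
    simp only [intCode, intNegB]
    have h1 : (2 * n) % 2 = 0 := by omega
    have h2 : ¬ ((Int.ofNat n) < 0) := Int.not_lt.mpr (Int.ofNat_nonneg n)
    simp [h1, h2]
  | negSucc n =>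
    simp only [intCode, intNegB]
    have h1 : (2 * n + 1) % 2 = 1 := by omega
    simp [h1, Int.negSucc_lt_zero]

lemma intCode_intDecode (c : ℕ) : intCode (intDecode c) = c := by
  unfold intDecode
  split <;> simp only [intCode] <;> omega

lemma natAbs_intDecode (c : ℕ) : (intDecode c).natAbs = intMag c := by
  unfold intDecode intMag
  split <;> simp [Int.natAbs]

lemma primrec_intMag : Primrec intMag :=
  Primrec.ite (Primrec.eq.comp (Primrec.nat_mod.comp .id (.const 2)) (.const 0))
    (Primrec.nat_div.comp .id (.const 2))
    (Primrec.succ.comp (Primrec.nat_div.comp .id (.const 2)))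

lemma primrec_intNegB : Primrec intNegB :=
  Primrec.eq.decide.comp (Primrec.nat_mod.comp .id (.const 2)) (.const 1)

/-! ### the sigma-encoding of ℚ -/

def QE : ℚ → ℕ := @Encodable.encode ℚ Rat.instEncodable

lemma QE_eq (q : ℚ) : QE q = Nat.pair (intCode q.num) q.den := by
  rcases q with ⟨num, den, h1, h2⟩
  cases num <;> rfl

def memS : ℕ → Bool := fun x =>
  decide (0 < x.unpair.2) && decide (Nat.gcd (intMag x.unpair.1) x.unpair.2 = 1)

def SP : ℕ → Prop := fun x => memS x = true

instance : DecidablePred SP := fun _ => instDecidableEqBool _ _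

lemma mem_range_QE_iff (x : ℕ) : x ∈ Set.range QE ↔ SP x := by
  constructor
  · rintro ⟨q, rfl⟩
    rw [QE_eq]
    simp only [SP, memS, Nat.unpair_pair, Bool.and_eq_true, decide_eq_true_eq]
    exact ⟨q.pos, by rw [intMag_intCode]; exact q.reduced⟩
  · intro hx
    simp only [SP, memS, Bool.and_eq_true, decide_eq_true_eq] at hx
    refine ⟨⟨intDecode x.unpair.1, x.unpair.2, by omega, ?_⟩, ?_⟩
    · rw [Nat.coprime_iff_gcd_eq_one, natAbs_intDecode]; exact hx.2
    · rw [QE_eq]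
      simp only [intCode_intDecode]
      exact Nat.pair_unpair x

lemma QE_injective : Function.Injective QE := Encodable.encode_injective (α := ℚ)

lemma SP_infinite : (setOf SP).Infinite := by
  have : Set.range QE = setOf SP := Set.ext fun x => mem_range_QE_iff x
  rw [← this]
  exact Set.infinite_range_of_injective QE_injective

/-! ### Nat.find is computable -/

theorem computable_nat_find {α} [Primcodable α] {p : α → ℕ → Bool}
    (hp : Computable₂ p) (H : ∀ a, ∃ n, p a n = true) :
    Computable fun a => Nat.find (H a) := by
  have h1 : Partrec₂ fun (a : α) (n : ℕ) => (Part.some (p a n) : Part Bool) :=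
    Computable₂.partrec₂ hp
  have h2 : Partrec fun a => Nat.rfind fun n => (Part.some (p a n) : Part Bool) :=
    Partrec.rfind h1
  apply Partrec.of_eq_tot h2
  intro a
  refine Nat.mem_rfind.mpr ?_
  constructor
  · simp [Nat.find_spec (H a)]
  · intro m hm
    simp [Nat.find_min (H a) hm]

/-! ### the nth-element function of `SP` -/

lemma exS : ∃ y, memS y = true := by
  obtain ⟨y, hy⟩ := SP_infinite.nonempty
  exact ⟨y, hy⟩

lemma exGt (t : ℕ) : ∃ y, (memS y && decide (t < y)) = true := by
  obtain ⟨y, hy, hty⟩ := SP_infinite.exists_gt t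
  have hy' : memS y = true := hy
  exact ⟨y, by simp [hy', hty]⟩

def XF : ℕ → ℕ :=
  fun n => Nat.rec (Nat.find exS) (fun _ ih => Nat.find (exGt ih)) n

lemma primrec_memS : Primrec memS :=
  Primrec₂.comp Primrec.and
    (Primrec₂.comp Primrec.nat_lt.decide (Primrec.const 0) (Primrec.snd.comp Primrec.unpair))
    (Primrec₂.comp Primrec.eq.decide
      (Primrec₂.comp primrec_gcd (primrec_intMag.comp (Primrec.fst.comp Primrec.unpair))
        (Primrec.snd.comp Primrec.unpair))
      (Primrec.const 1))

lemma XF_computable : Computable XF := by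
  have hnxt : Computable (fun t => Nat.find (exGt t)) := by
    apply computable_nat_find (p := fun t y => memS y && decide (t < y))
    exact (Primrec₂.comp Primrec.and (primrec_memS.comp Primrec.snd)
      (Primrec₂.comp Primrec.nat_lt.decide Primrec.fst Primrec.snd)).to_comp
  exact Computable.nat_rec (f := fun n : ℕ => n) (g := fun _ => Nat.find exS)
    (h := fun _ pr => Nat.find (exGt pr.2)) Computable.id (Computable.const (Nat.find exS))
    (Computable₂.mk (hnxt.comp (Computable.snd.comp Computable.snd)))

/-! ### XF equals Nat.nth SP -/

lemma find_eq_find {p q : ℕ → Prop} {ip : DecidablePred p} {iq : DecidablePred q}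
    (h : ∀ n, p n ↔ q n) (hp : ∃ n, p n) (hq : ∃ n, q n) :
    @Nat.find p ip hp = @Nat.find q iq hq :=
  le_antisymm (Nat.find_min' hp ((h _).mpr (Nat.find_spec hq)))
    (Nat.find_min' hq ((h _).mp (Nat.find_spec hp)))

lemma nth_succ_eq (n : ℕ) (h : ∃ y, SP y ∧ Nat.nth SP n < y) :
    Nat.nth SP (n + 1) = Nat.find h := by
  have hNE : {x | SP x ∧ Nat.nth SP n < x}.Nonempty := h
  rw [Nat.nth_eq_sInf]
  have hset : {x | SP x ∧ ∀ k < n + 1, Nat.nth SP k < x} = {x | SP x ∧ Nat.nth SP n < x} := by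
    ext x
    simp only [Set.mem_setOf_eq, and_congr_right_iff]
    intro _
    constructor
    · intro hk; exact hk n (Nat.lt_succ_self n)
    · intro hk k hkn
      exact lt_of_le_of_lt (Nat.nth_monotone SP_infinite (Nat.lt_succ_iff.mp hkn)) hk
  rw [hset, Nat.sInf_def hNE]
  exact find_eq_find (fun y => Iff.rfl) hNE h

lemma XF_eq_nth : ∀ n, XF n = Nat.nth SP n := by
  intro n
  induction n with
  | zero =>
    show Nat.find exS = Nat.nth SP 0
    rw [Nat.nth_zero_of_exists (p := SP) exS]
    exact find_eq_find (fun _ => Iff.rfl) _ _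
  | succ n ih =>
    show Nat.find (exGt (XF n)) = Nat.nth SP (n + 1)
    have h : ∃ y, SP y ∧ Nat.nth SP n < y := by
      obtain ⟨y, hy⟩ := exGt (Nat.nth SP n)
      simp only [Bool.and_eq_true, decide_eq_true_eq] at hy
      exact ⟨y, hy.1, hy.2⟩
    rw [nth_succ_eq n h]
    apply find_eq_find
    intro y
    simp [SP, ih]

/-! ### the representation function -/

def qrep : ℚ → ℕ := fun q => XF (@Encodable.encode ℚ Primcodable.toEncodable q)

lemma qrep_computable : Computable qrep := XF_computable.comp Computable.encode

lemma count_SP_eq (q : ℚ) :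
    @Encodable.encode ℚ Primcodable.toEncodable q = Nat.count SP (QE q) := by
  have h0 : @Encodable.encode ℚ Primcodable.toEncodable q =
      (List.range (QE q)).countP
        (fun y => @decide (y ∈ Set.range QE) (Encodable.decidableRangeEncode ℚ y)) := rfl
  rw [h0]
  show _ = (List.range (QE q)).countP (fun y => decide (SP y))
  apply List.countP_congr
  intro y _
  simp only [decide_eq_true_eq]
  exact (@decide_eq_true_iff _ (Encodable.decidableRangeEncode ℚ y)).trans (mem_range_QE_iff y)

lemma qrep_eq (q : ℚ) : qrep q = Nat.pair (intCode q.num) q.den := by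
  have hq : SP (QE q) := (mem_range_QE_iff _).mp ⟨q, rfl⟩
  have h : qrep q = Nat.nth SP (Nat.count SP (QE q)) := by
    rw [qrep, count_SP_eq q, XF_eq_nth]
  rw [h, Nat.nth_count hq, QE_eq]

/-! ### deciding `|q - r| < 2⁻¹ ^ s` on codes -/

def qB : ℕ → ℕ → ℕ → Bool := fun x y s =>
  let c1 := x.unpair.1; let d1 := x.unpair.2
  let c2 := y.unpair.1; let d2 := y.unpair.2
  let m1 := intMag c1 * d2
  let m2 := intMag c2 * d1
  let nabs := if intNegB c1 = intNegB c2 then max m1 m2 - min m1 m2 else m1 + m2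
  decide (nabs * 2 ^ s < d1 * d2)

lemma primrec_qB : Primrec fun p : ℕ × ℕ × ℕ => qB p.1 p.2.1 p.2.2 := by
  have hc1 : Primrec fun p : ℕ × ℕ × ℕ => (Nat.unpair p.1).1 :=
    Primrec.fst.comp (Primrec.unpair.comp Primrec.fst)
  have hd1 : Primrec fun p : ℕ × ℕ × ℕ => (Nat.unpair p.1).2 :=
    Primrec.snd.comp (Primrec.unpair.comp Primrec.fst)
  have hc2 : Primrec fun p : ℕ × ℕ × ℕ => (Nat.unpair p.2.1).1 :=
    Primrec.fst.comp (Primrec.unpair.comp (Primrec.fst.comp Primrec.snd))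
  have hd2 : Primrec fun p : ℕ × ℕ × ℕ => (Nat.unpair p.2.1).2 :=
    Primrec.snd.comp (Primrec.unpair.comp (Primrec.fst.comp Primrec.snd))
  have hs : Primrec fun p : ℕ × ℕ × ℕ => p.2.2 := Primrec.snd.comp Primrec.snd
  have hm1 : Primrec fun p : ℕ × ℕ × ℕ => intMag (Nat.unpair p.1).1 * (Nat.unpair p.2.1).2 :=
    Primrec₂.comp Primrec.nat_mul (primrec_intMag.comp hc1) hd2
  have hm2 : Primrec fun p : ℕ × ℕ × ℕ => intMag (Nat.unpair p.2.1).1 * (Nat.unpair p.1).2 :=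
    Primrec₂.comp Primrec.nat_mul (primrec_intMag.comp hc2) hd1
  have hnabs : Primrec fun p : ℕ × ℕ × ℕ =>
      if intNegB (Nat.unpair p.1).1 = intNegB (Nat.unpair p.2.1).1 then
        max (intMag (Nat.unpair p.1).1 * (Nat.unpair p.2.1).2)
            (intMag (Nat.unpair p.2.1).1 * (Nat.unpair p.1).2) -
          min (intMag (Nat.unpair p.1).1 * (Nat.unpair p.2.1).2)
            (intMag (Nat.unpair p.2.1).1 * (Nat.unpair p.1).2)
      else intMag (Nat.unpair p.1).1 * (Nat.unpair p.2.1).2 +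
        intMag (Nat.unpair p.2.1).1 * (Nat.unpair p.1).2 :=
    Primrec.ite
      (Primrec.eq.comp (primrec_intNegB.comp hc1) (primrec_intNegB.comp hc2))
      (Primrec₂.comp Primrec.nat_sub (Primrec₂.comp Primrec.nat_max hm1 hm2)
        (Primrec₂.comp Primrec.nat_min hm1 hm2))
      (Primrec₂.comp Primrec.nat_add hm1 hm2)
  have hpow : Primrec₂ ((· ^ ·) : ℕ → ℕ → ℕ) := Primrec₂.unpaired'.mp Nat.Primrec.pow
  exact Primrec₂.comp Primrec.nat_lt.decide
    (Primrec₂.comp Primrec.nat_mul hnabs (Primrec₂.comp hpow (Primrec.const 2) hs))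
    (Primrec₂.comp Primrec.nat_mul hd1 hd2)

lemma natAbs_sub_eq (z w : ℤ) : (z - w).natAbs =
    if decide (z < 0) = decide (w < 0) then max z.natAbs w.natAbs - min z.natAbs w.natAbs
    else z.natAbs + w.natAbs := by
  split
  · rename_i h
    have h' : z < 0 ↔ w < 0 := decide_eq_decide.mp h
    omega
  · rename_i h
    have h' : ¬ (z < 0 ↔ w < 0) := fun hh => h (decide_eq_decide.mpr hh)
    omega

lemma mul_den_neg (z : ℤ) (d : ℕ) (hd : 0 < d) : (z * (d : ℤ) < 0) ↔ z < 0 := by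
  have h : (0:ℤ) < d := by exact_mod_cast hd
  constructor
  · intro hlt; by_contra h'; push_neg at h'; nlinarith
  · intro hlt; exact mul_neg_of_neg_of_pos hlt h

lemma abs_sub_lt_iff_code (q r : ℚ) (s : ℕ) :
    |q - r| < (2:ℚ)⁻¹ ^ s ↔ (q.num * r.den - r.num * q.den).natAbs * 2 ^ s < q.den * r.den := by
  have hqd : (0:ℚ) < q.den := by exact_mod_cast q.pos
  have hrd : (0:ℚ) < r.den := by exact_mod_cast r.pos
  have key : q - r = ((q.num * r.den - r.num * q.den : ℤ) : ℚ) / ((q.den : ℚ) * r.den) := by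
    conv_lhs => rw [← Rat.num_div_den q, ← Rat.num_div_den r]
    rw [div_sub_div _ _ (ne_of_gt hqd) (ne_of_gt hrd)]
    push_cast
    ring_nf
  rw [key, abs_div, abs_of_pos (mul_pos hqd hrd), div_lt_iff₀ (mul_pos hqd hrd), inv_pow,
    inv_mul_eq_div, lt_div_iff₀ (pow_pos two_pos s), ← Int.cast_abs, Int.abs_eq_natAbs]
  constructor
  · intro h
    exact_mod_cast h
  · intro h
    exact_mod_cast h

lemma qB_spec (q r : ℚ) (s : ℕ) :
    qB (qrep q) (qrep r) s = decide (|q - r| < (2:ℚ)⁻¹ ^ s) := by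
  have e1 : (q.num * (r.den:ℤ)).natAbs = q.num.natAbs * r.den := by
    rw [Int.natAbs_mul, Int.natAbs_natCast]
  have e2 : (r.num * (q.den:ℤ)).natAbs = r.num.natAbs * q.den := by
    rw [Int.natAbs_mul, Int.natAbs_natCast]
  have hif : (if decide (q.num < 0) = decide (r.num < 0) then
      max (q.num.natAbs * r.den) (r.num.natAbs * q.den) -
        min (q.num.natAbs * r.den) (r.num.natAbs * q.den)
    else q.num.natAbs * r.den + r.num.natAbs * q.den)
      = (q.num * r.den - r.num * q.den).natAbs := by
    rw [natAbs_sub_eq, e1, e2, decide_eq_decide.mpr (mul_den_neg _ _ r.pos),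
      decide_eq_decide.mpr (mul_den_neg _ _ q.pos)]
  rw [qrep_eq, qrep_eq]
  unfold qB
  simp only [Nat.unpair_pair, intMag_intCode, intNegB_intCode]
  rw [hif]
  exact decide_eq_decide.mpr (abs_sub_lt_iff_code q r s).symm

end

end Stmt18Aux
namespace Stmt18Aux

noncomputable section

open Encodable Filter Topology

attribute [irreducible] qB qrep XF memS intMag intNegB intCode

section Construction

variable (a b : ℕ → ℚ) (α : ℝ)

def sP (n : ℕ) (uv : ℕ × ℕ) (p : ℕ) : Bool :=
  qB (qrep (b (uv.1 + 1 + p.unpair.1))) (qrep (a (uv.2 + 1 + p.unpair.2))) n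

lemma sP_ex (ha : Tendsto (fun n => (a n : ℝ)) atTop (nhds α))
    (hb : Tendsto (fun n => (b n : ℝ)) atTop (nhds α)) (n : ℕ) (uv : ℕ × ℕ) :
    ∃ p, sP a b n uv p = true := by
  have hε : (0:ℝ) < ((2:ℝ)⁻¹ ^ n) / 2 := by positivity
  obtain ⟨M1, hM1⟩ := Metric.tendsto_atTop.mp hb _ hε
  obtain ⟨M2, hM2⟩ := Metric.tendsto_atTop.mp ha _ hε
  refine ⟨Nat.pair (max M1 (uv.1 + 1) - (uv.1 + 1)) (max M2 (uv.2 + 1) - (uv.2 + 1)), ?_⟩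
  unfold sP
  rw [Nat.unpair_pair]
  have hm : uv.1 + 1 + (max M1 (uv.1 + 1) - (uv.1 + 1)) = max M1 (uv.1 + 1) := by omega
  have hn' : uv.2 + 1 + (max M2 (uv.2 + 1) - (uv.2 + 1)) = max M2 (uv.2 + 1) := by omega
  rw [hm, hn', qB_spec, decide_eq_true_eq]
  set m := max M1 (uv.1 + 1)
  set n' := max M2 (uv.2 + 1)
  have h1 : dist ((b m : ℝ)) α < ((2:ℝ)⁻¹ ^ n) / 2 := hM1 m (le_max_left _ _)
  have h2 : dist ((a n' : ℝ)) α < ((2:ℝ)⁻¹ ^ n) / 2 := hM2 n' (le_max_left _ _)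
  have h3 : |(b m : ℝ) - (a n' : ℝ)| < (2:ℝ)⁻¹ ^ n := by
    rw [Real.dist_eq] at h1 h2
    calc |(b m : ℝ) - (a n' : ℝ)| ≤ |(b m : ℝ) - α| + |α - (a n' : ℝ)| := abs_sub_le _ _ _
      _ = |(b m : ℝ) - α| + |(a n' : ℝ) - α| := by rw [abs_sub_comm α]
      _ < (2:ℝ)⁻¹ ^ n := by linarith
  have h4 : ((|b m - a n'| : ℚ) : ℝ) < (((2:ℚ)⁻¹ ^ n : ℚ) : ℝ) := by push_cast; exact h3
  exact_mod_cast h4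

variable (ha : Tendsto (fun n => (a n : ℝ)) atTop (nhds α))
    (hb : Tendsto (fun n => (b n : ℝ)) atTop (nhds α))

def FFstep (k : ℕ) (ih : ℕ × ℕ) : ℕ × ℕ :=
  (ih.1 + 1 + (Nat.find (sP_ex a b α ha hb k ih)).unpair.1,
   ih.2 + 1 + (Nat.find (sP_ex a b α ha hb k ih)).unpair.2)

def FF : ℕ → ℕ × ℕ :=
  fun n => Nat.rec (motive := fun _ => ℕ × ℕ) (0, 0)
    (fun k ih => FFstep a b α ha hb k ih) n

lemma FF_succ (n : ℕ) :
    FF a b α ha hb (n + 1) = FFstep a b α ha hb n (FF a b α ha hb n) := rfl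

lemma FF_computable (hca : Computable a) (hcb : Computable b) :
    Computable (FF a b α ha hb) := by
  have hfind : Computable fun x : ℕ × (ℕ × ℕ) =>
      Nat.find (sP_ex a b α ha hb x.1 x.2) := by
    apply computable_nat_find (p := fun (x : ℕ × (ℕ × ℕ)) (p : ℕ) => sP a b x.1 x.2 p)
    have hb' : Computable fun y : (ℕ × (ℕ × ℕ)) × ℕ => qrep (b (y.1.2.1 + 1 + y.2.unpair.1)) :=
      (qrep_computable.comp hcb).comp
        ((Primrec₂.comp Primrec.nat_add
          (Primrec.succ.comp (Primrec.fst.comp (Primrec.snd.comp Primrec.fst)))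
          (Primrec.fst.comp (Primrec.unpair.comp Primrec.snd))).to_comp)
    have ha' : Computable fun y : (ℕ × (ℕ × ℕ)) × ℕ => qrep (a (y.1.2.2 + 1 + y.2.unpair.2)) :=
      (qrep_computable.comp hca).comp
        ((Primrec₂.comp Primrec.nat_add
          (Primrec.succ.comp (Primrec.snd.comp (Primrec.snd.comp Primrec.fst)))
          (Primrec.snd.comp (Primrec.unpair.comp Primrec.snd))).to_comp)
    have hn : Computable fun y : (ℕ × (ℕ × ℕ)) × ℕ => y.1.1 :=
      Computable.fst.comp Computable.fst
    exact Computable₂.mk ((primrec_qB.to_comp).comp (hb'.pair (ha'.pair hn)))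
  have hstep2 : Computable fun x : ℕ × (ℕ × ℕ) => FFstep a b α ha hb x.1 x.2 := by
    have cA : Computable fun x : ℕ × (ℕ × ℕ) => x.2.1 + 1 :=
      Computable.succ.comp (Computable.fst.comp Computable.snd)
    have cB : Computable fun x : ℕ × (ℕ × ℕ) => x.2.2 + 1 :=
      Computable.succ.comp (Computable.snd.comp Computable.snd)
    have cF1 : Computable fun x : ℕ × (ℕ × ℕ) =>
        (Nat.find (sP_ex a b α ha hb x.1 x.2)).unpair.1 :=
      Computable.fst.comp (Computable.unpair.comp hfind)
    have cF2 : Computable fun x : ℕ × (ℕ × ℕ) =>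
        (Nat.find (sP_ex a b α ha hb x.1 x.2)).unpair.2 :=
      Computable.snd.comp (Computable.unpair.comp hfind)
    exact ((Primrec.nat_add.to_comp.comp cA cF1).pair
      (Primrec.nat_add.to_comp.comp cB cF2)).of_eq (fun x => rfl)
  have h := Computable.nat_rec (f := fun n : ℕ => n) (g := fun _ => ((0, 0) : ℕ × ℕ))
    (h := fun (_ : ℕ) (pr : ℕ × (ℕ × ℕ)) => FFstep a b α ha hb pr.1 pr.2)
    Computable.id (Computable.const _) (Computable₂.mk (hstep2.comp Computable.snd))
  exact h.of_eq (fun n => rfl)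

def uF : ℕ → ℕ := fun n => (FF a b α ha hb n).1

def vF : ℕ → ℕ := fun n => (FF a b α ha hb n).2

lemma uF_mono : StrictMono (uF a b α ha hb) := by
  apply strictMono_nat_of_lt_succ
  intro n
  show (FF a b α ha hb n).1 < (FF a b α ha hb (n+1)).1
  rw [FF_succ]
  unfold FFstep
  simp only
  omega

lemma vF_mono : StrictMono (vF a b α ha hb) := by
  apply strictMono_nat_of_lt_succ
  intro n
  show (FF a b α ha hb n).2 < (FF a b α ha hb (n+1)).2
  rw [FF_succ]
  unfold FFstep
  simp only
  omega

lemma uF_computable (hca : Computable a) (hcb : Computable b) :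
    Computable (uF a b α ha hb) :=
  Computable.fst.comp (FF_computable a b α ha hb hca hcb)

lemma vF_computable (hca : Computable a) (hcb : Computable b) :
    Computable (vF a b α ha hb) :=
  Computable.snd.comp (FF_computable a b α ha hb hca hcb)

lemma FF_spec (n : ℕ) :
    |b (uF a b α ha hb (n+1)) - a (vF a b α ha hb (n+1))| < (2:ℚ)⁻¹ ^ n := by
  have h := Nat.find_spec (sP_ex a b α ha hb n (FF a b α ha hb n))
  unfold sP at h
  rw [qB_spec, decide_eq_true_eq] at h
  exact h

lemma FF_spec_real (n : ℕ) :
    |(b (uF a b α ha hb (n+1)) : ℝ) - (a (vF a b α ha hb (n+1)) : ℝ)| ≤ (2:ℝ)⁻¹ ^ n := by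
  have h := FF_spec a b α ha hb n
  have h2 : ((|b (uF a b α ha hb (n+1)) - a (vF a b α ha hb (n+1))| : ℚ) : ℝ) <
      (((2:ℚ)⁻¹ ^ n : ℚ) : ℝ) := by exact_mod_cast h
  push_cast at h2
  linarith

end Construction

end

end Stmt18Aux

namespace Stmt18Aux

open Filter Topology

lemma forward_bound {α : ℝ} (b : ℕ → ℚ) (hcb : Computable b)
    (hblim : Filter.Tendsto (fun n => (b n : ℝ)) Filter.atTop (nhds α))
    (hbncc : NCC (fun n => ((b n : ℚ) : ℝ)))
    (a : ℕ → ℚ) (hca : Computable a) (hamono : StrictMono a)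
    (halim : Filter.Tendsto (fun n => (a n : ℝ)) Filter.atTop (nhds α)) :
    CCto0 (fun n => ((a (n + 1) : ℚ) : ℝ) - ((a n : ℚ) : ℝ)) := by
  obtain ⟨g1, hg1c, hg1⟩ := hbncc (uF a b α halim hblim)
    (uF_computable a b α halim hblim hca hcb) (uF_mono a b α halim hblim)
  refine ⟨fun k => vF a b α halim hblim (max (g1 (k + 2)) (k + 2) + 1), ?_, ?_⟩
  · have hin : Computable fun k : ℕ => max (g1 (k + 2)) (k + 2) + 1 :=
      Computable.succ.comp (Primrec.nat_max.to_comp.comp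
        (hg1c.comp (Computable.succ.comp Computable.succ))
        (Computable.succ.comp Computable.succ))
    exact (vF_computable a b α halim hblim hca hcb).comp hin
  · intro k j hm
    have hvm : vF a b α halim hblim (max (g1 (k + 2)) (k + 2) + 1) ≤ j := hm
    have hNm : max (g1 (k + 2)) (k + 2) + 1 ≤ j :=
      le_trans ((vF_mono a b α halim hblim).le_apply) hvm
    have hn_ge : max (g1 (k + 2)) (k + 2) + 1 ≤
        Nat.findGreatest (fun i => vF a b α halim hblim i ≤ j) j :=
      Nat.le_findGreatest hNm hvm
    have hn_le : vF a b α halim hblim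
        (Nat.findGreatest (fun i => vF a b α halim hblim i ≤ j) j) ≤ j :=
      Nat.findGreatest_spec (P := fun i => vF a b α halim hblim i ≤ j)
        (m := max (g1 (k + 2)) (k + 2) + 1) hNm hvm
    have hm_lt : j < vF a b α halim hblim
        (Nat.findGreatest (fun i => vF a b α halim hblim i ≤ j) j + 1) := by
      rcases le_or_gt (Nat.findGreatest (fun i => vF a b α halim hblim i ≤ j) j + 1) j with h | h
      · by_contra hc
        push_neg at hc
        exact Nat.findGreatest_is_greatest (Nat.lt_succ_self _) h hc
      · exact lt_of_lt_of_le h ((vF_mono a b α halim hblim).le_apply)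
    obtain ⟨n', hn'⟩ : ∃ n',
        Nat.findGreatest (fun i => vF a b α halim hblim i ≤ j) j = n' + 1 :=
      ⟨Nat.findGreatest (fun i => vF a b α halim hblim i ≤ j) j - 1, by omega⟩
    rw [hn'] at hn_ge hn_le hm_lt
    have hA : g1 (k + 2) ≤ max (g1 (k + 2)) (k + 2) := le_max_left _ _
    have hB : k + 2 ≤ max (g1 (k + 2)) (k + 2) := le_max_right _ _
    have s1 := FF_spec_real a b α halim hblim (n' + 1)
    have s2 := FF_spec_real a b α halim hblim n'
    have s3 : dist ((b (uF a b α halim hblim (n' + 1 + 1)) : ℝ))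
        ((b (uF a b α halim hblim (n' + 1)) : ℝ)) ≤ (2:ℝ)⁻¹ ^ (k + 2) := by
      have h3 := hg1 (k + 2) (n' + 1) (by omega)
      rwa [abs_of_nonneg dist_nonneg] at h3
    rw [Real.dist_eq] at s3
    have hmono : ∀ i j : ℕ, i ≤ j → ((a i : ℚ) : ℝ) ≤ ((a j : ℚ) : ℝ) :=
      fun i j h => Rat.cast_le.mpr (hamono.monotone h)
    have habs : |((a (j + 1) : ℚ) : ℝ) - ((a j : ℚ) : ℝ)|
        = ((a (j + 1) : ℚ) : ℝ) - ((a j : ℚ) : ℝ) :=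
      abs_of_nonneg (by linarith [hmono j (j + 1) (Nat.le_succ j)])
    have hup : ((a (j + 1) : ℚ) : ℝ) ≤ ((a (vF a b α halim hblim (n' + 1 + 1)) : ℚ) : ℝ) :=
      hmono _ _ hm_lt
    have hdn : ((a (vF a b α halim hblim (n' + 1)) : ℚ) : ℝ) ≤ ((a j : ℚ) : ℝ) :=
      hmono _ _ hn_le
    have p1 : (2:ℝ)⁻¹ ^ (n' + 1) ≤ (2:ℝ)⁻¹ ^ (k + 2) :=
      pow_le_pow_of_le_one (by norm_num) (by norm_num) (by omega)
    have p2 : (2:ℝ)⁻¹ ^ n' ≤ (2:ℝ)⁻¹ ^ (k + 2) :=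
      pow_le_pow_of_le_one (by norm_num) (by norm_num) (by omega)
    have p3 : (3:ℝ) * (2:ℝ)⁻¹ ^ (k + 2) ≤ (2:ℝ)⁻¹ ^ k := by
      have he : (2:ℝ)⁻¹ ^ (k + 2) = (2:ℝ)⁻¹ ^ k / 4 := by rw [pow_add]; norm_num; ring
      have hp : (0:ℝ) < (2:ℝ)⁻¹ ^ k := by positivity
      rw [he]; linarith
    obtain ⟨l1, r1⟩ := abs_le.mp s1
    obtain ⟨l2, r2⟩ := abs_le.mp s2
    obtain ⟨l3, r3⟩ := abs_le.mp s3
    show |((a (j + 1) : ℚ) : ℝ) - ((a j : ℚ) : ℝ)| ≤ (2:ℝ)⁻¹ ^ k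
    rw [habs]
    linarith [hup, hdn, l1, r2, r3, p1, p2, p3]

end Stmt18Aux

theorem stmt18 (α : ℝ)
    (hlc : ∃ a : ℕ → ℚ, Computable a ∧ StrictMono a ∧
      Filter.Tendsto (fun n => (a n : ℝ)) Filter.atTop (nhds α)) :
    NearlyCompReal α ↔
      ∀ a : ℕ → ℚ, Computable a → StrictMono a →
        Filter.Tendsto (fun n => (a n : ℝ)) Filter.atTop (nhds α) →
        CCto0 (fun n => (a (n + 1) : ℝ) - (a n : ℝ)) := by
  constructor
  · rintro ⟨b, hcb, hblim, hbncc⟩ a hca hamono halim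
    exact Stmt18Aux.forward_bound b hcb hblim hbncc a hca hamono halim
  · intro H
    obtain ⟨a, hca, hamono, halim⟩ := hlc
    refine ⟨a, hca, halim, ?_⟩
    intro r hrc hrm
    obtain ⟨g, hgc, hg⟩ := H (fun n => a (r n)) (hca.comp hrc) (hamono.comp hrm)
      (halim.comp hrm.tendsto_atTop)
    refine ⟨g, hgc, fun n m hnm => ?_⟩
    have h := hg n m hnm
    show |dist ((a (r (m + 1)) : ℝ)) ((a (r m)) : ℝ)| ≤ (2:ℝ)⁻¹ ^ n
    rw [abs_of_nonneg dist_nonneg, Real.dist_eq]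
    exact h
end
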